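/- Assume hypotheses (H1), (H3) and (H4). If ξ₁* = (x₁*_n, y₁*_n) and ξ₂* = (x₂*_n, y₂*_n) are two solutions of the auxiliary system with x₁*_0 > 0, y₁*_0 > 0, x₂*_0 > 0, y₂*_0 > 0, then for every λ ∈ ℕ, R_D^ℓ(ξ₁*, λ) = R_D^ℓ(ξ₂*, λ) and R_D^u(ξ₁*, λ) = R_D^u(ξ₂*, λ); that is, the numbers R_D^ℓ(ξ*, λ) and R_D^u(ξ*, λ) do not depend on the chosen positive solution of the auxiliary system. -/

import Mathlib

open Filter

noncomputable section

/-- Partial derivative of `φ` with respect to the second variable, evaluated at `(x, 0)`. -/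
def d2 (φ : ℝ → ℝ → ℝ) (x : ℝ) : ℝ := deriv (fun y => φ x y) 0

/-- A bounded nonnegative real sequence. -/
def BddNonneg (u : ℕ → ℝ) : Prop := (∀ n, 0 ≤ u n) ∧ ∃ C : ℝ, ∀ n, u n ≤ C

/-- (H1): `φ` is nonnegative and differentiable on `[0,∞)²`, and `x ↦ ∂₂φ(x,0)` is
non-decreasing and Lipschitz on `[0,∞)` with constant `kφ`. -/
def HypH1 (φ : ℝ → ℝ → ℝ) (kφ : ℝ) : Prop :=
  (∀ x y, 0 ≤ x → 0 ≤ y → 0 ≤ φ x y) ∧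
  DifferentiableOn ℝ (fun q : ℝ × ℝ => φ q.1 q.2) (Set.Ici (0:ℝ) ×ˢ Set.Ici (0:ℝ)) ∧
  (∀ x₁ x₂, 0 ≤ x₁ → x₁ ≤ x₂ → d2 φ x₁ ≤ d2 φ x₂) ∧
  (∀ x₁ x₂, 0 ≤ x₁ → 0 ≤ x₂ → |d2 φ x₁ - d2 φ x₂| ≤ kφ * |x₁ - x₂|)

/-- (H2): `φ(x,0) = ψ(x,0) = φ(0,y) = ψ(0,y) = 0` for all `x, y ≥ 0`. -/
def HypH2 (φ ψ : ℝ → ℝ → ℝ) : Prop :=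
  ∀ x y, 0 ≤ x → 0 ≤ y → φ x 0 = 0 ∧ ψ x 0 = 0 ∧ φ 0 y = 0 ∧ ψ 0 y = 0

/-- (H3): `limsup_{n→∞} ∏_{k=n}^{n+ωμ} 1/(1+μ_k) < 1` for some `ωμ`. -/
def HypH3 (μ : ℕ → ℝ) : Prop :=
  ∃ ωμ : ℕ, Filter.limsup
    (fun n => ∏ k ∈ Finset.Icc n (n + ωμ), (1 + μ k)⁻¹) Filter.atTop < 1

/-- (H4): `liminf_{n→∞} Σ_{k=n+1}^{n+ωΛ} Λ_k > 0` and `liminf_{n→∞} Σ_{k=n+1}^{n+ωp} p_k > 0`. -/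
def HypH4 (Lam p : ℕ → ℝ) : Prop :=
  (∃ ωΛ : ℕ, 0 < Filter.liminf
    (fun n => ∑ k ∈ Finset.Icc (n+1) (n+ωΛ), Lam k) Filter.atTop) ∧
  (∃ ωp : ℕ, 0 < Filter.liminf
    (fun n => ∑ k ∈ Finset.Icc (n+1) (n+ωp), p k) Filter.atTop)

/-- (H5): for each `x ≥ 0`, the map `y ↦ φ(x,y)/y` is non-increasing on `(0,∞)`. -/
def HypH5 (φ : ℝ → ℝ → ℝ) : Prop :=
  ∀ x, 0 ≤ x → ∀ y₁ y₂, 0 < y₁ → y₁ ≤ y₂ → φ x y₂ / y₂ ≤ φ x y₁ / y₁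

/-- The discrete SIRVS system. -/
def SIRVS (Lam μ p η α β σ γ : ℕ → ℝ) (φ ψ : ℝ → ℝ → ℝ) (S I R V : ℕ → ℝ) : Prop :=
  ∀ n : ℕ,
    S (n+1) - S n
      = Lam n - β n * φ (S (n+1)) (I n) - (μ n + p n) * S (n+1) + η n * V (n+1) ∧
    I (n+1) - I n
      = β n * φ (S (n+1)) (I n) + σ n * ψ (V (n+1)) (I n) - (μ n + α n + γ n) * I (n+1) ∧
    R (n+1) - R n = γ n * I (n+1) - μ n * R (n+1) ∧
    V (n+1) - V n = p n * S (n+1) - (μ n + η n) * V (n+1) - σ n * ψ (V (n+1)) (I n)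

/-- The auxiliary (disease-free) system. -/
def AuxSys (Lam μ p η : ℕ → ℝ) (x y : ℕ → ℝ) : Prop :=
  ∀ n : ℕ,
    x (n+1) = (Lam n + η n * y (n+1) + x n) / (1 + μ n + p n) ∧
    y (n+1) = (p n * x (n+1) + y n) / (1 + μ n + η n)

/-- The threshold `R_D^ℓ(ξ*, λ)`. -/
def RDl (μ α β σ γ : ℕ → ℝ) (φ ψ : ℝ → ℝ → ℝ) (x y : ℕ → ℝ) (lam : ℕ) : ℝ :=
  Filter.liminf (fun n => ∏ k ∈ Finset.Icc n (n + lam),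
    (1 + β k * d2 φ (x (k+1)) + σ k * d2 ψ (y (k+1))) / (1 + μ k + α k + γ k))
    Filter.atTop

/-- The threshold `R_D^u(ξ*, λ)`. -/
def RDu (μ α β σ γ : ℕ → ℝ) (φ ψ : ℝ → ℝ → ℝ) (x y : ℕ → ℝ) (lam : ℕ) : ℝ :=
  Filter.limsup (fun n => ∏ k ∈ Finset.Icc n (n + lam),
    (1 + β k * d2 φ (x (k+1)) + σ k * d2 ψ (y (k+1))) / (1 + μ k + α k + γ k))
    Filter.atTop

section Helpers

lemma bdd_le_of_abs {a : ℕ → ℝ} {M : ℝ} (ha : ∀ n, |a n| ≤ M) :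
    IsBoundedUnder (· ≤ ·) atTop a :=
  isBoundedUnder_of ⟨M, fun n => (abs_le.1 (ha n)).2⟩

lemma bdd_ge_of_abs {a : ℕ → ℝ} {M : ℝ} (ha : ∀ n, |a n| ≤ M) :
    IsBoundedUnder (· ≥ ·) atTop a :=
  isBoundedUnder_of ⟨-M, fun n => (abs_le.1 (ha n)).1⟩

lemma limsup_le_aux {a b : ℕ → ℝ} {M : ℝ}
    (ha : ∀ n, |a n| ≤ M) (hb : ∀ n, |b n| ≤ M)
    (h : Tendsto (fun n => a n - b n) atTop (nhds 0)) :
    limsup a atTop ≤ limsup b atTop := by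
  refine le_of_forall_pos_le_add fun ε hε => ?_
  have hev : ∀ᶠ n in atTop, a n ≤ b n + ε := by
    filter_upwards [Metric.tendsto_nhds.1 h ε hε] with n hn
    simp only [Real.dist_eq, sub_zero] at hn
    have := (abs_lt.1 hn).2
    linarith
  have h1 : limsup a atTop ≤ limsup (fun n => b n + ε) atTop := by
    refine limsup_le_limsup hev ?_ ?_
    · exact (bdd_ge_of_abs ha).isCoboundedUnder_le
    · exact isBoundedUnder_of ⟨M + ε, fun n => by
        have := (abs_le.1 (hb n)).2; linarith⟩
  rwa [limsup_add_const atTop b ε (bdd_le_of_abs hb)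
    (bdd_ge_of_abs hb).isCoboundedUnder_le] at h1

lemma liminf_le_aux {a b : ℕ → ℝ} {M : ℝ}
    (ha : ∀ n, |a n| ≤ M) (hb : ∀ n, |b n| ≤ M)
    (h : Tendsto (fun n => a n - b n) atTop (nhds 0)) :
    liminf b atTop ≤ liminf a atTop := by
  refine le_of_forall_pos_le_add fun ε hε => ?_
  have hev : ∀ᶠ n in atTop, b n + -ε ≤ a n := by
    filter_upwards [Metric.tendsto_nhds.1 h ε hε] with n hn
    simp only [Real.dist_eq, sub_zero] at hn
    have := (abs_lt.1 hn).1
    linarith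
  have h1 : liminf (fun n => b n + -ε) atTop ≤ liminf a atTop := by
    refine liminf_le_liminf hev ?_ ?_
    · exact isBoundedUnder_of ⟨-M + -ε, fun n => by
        have := (abs_le.1 (hb n)).1; linarith⟩
    · exact (bdd_le_of_abs ha).isCoboundedUnder_ge
  rw [liminf_add_const atTop b (-ε) (bdd_le_of_abs hb).isCoboundedUnder_ge
    (bdd_ge_of_abs hb)] at h1
  linarith

lemma liminf_limsup_invariant {a b : ℕ → ℝ} {M : ℝ}
    (ha : ∀ n, |a n| ≤ M) (hb : ∀ n, |b n| ≤ M)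
    (h : Tendsto (fun n => a n - b n) atTop (nhds 0)) :
    liminf a atTop = liminf b atTop ∧ limsup a atTop = limsup b atTop := by
  have h' : Tendsto (fun n => b n - a n) atTop (nhds 0) := by
    have := h.neg
    simp only [neg_sub, neg_zero] at this
    exact this
  exact ⟨le_antisymm (liminf_le_aux hb ha h') (liminf_le_aux ha hb h),
    le_antisymm (limsup_le_aux ha hb h) (limsup_le_aux hb ha h')⟩

lemma iter_bound {s Lam μ : ℕ → ℝ} (hΛ : ∀ n, 0 ≤ Lam n) (hμ : ∀ n, 0 ≤ μ n)
    (hs : ∀ n, s (n+1) ≤ Lam n + s n * (1 + μ n)⁻¹) (n : ℕ) : ∀ j : ℕ,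
    s (n+j) ≤ (∑ k ∈ Finset.Ico n (n+j), Lam k) + s n * ∏ k ∈ Finset.Ico n (n+j), (1+μ k)⁻¹ := by
  intro j
  induction j with
  | zero => simp
  | succ j ih =>
    have hmem : n ≤ n + j := Nat.le_add_right n j
    have e1 : n + (j+1) = (n+j) + 1 := by omega
    rw [e1, Finset.sum_Ico_succ_top hmem, Finset.prod_Ico_succ_top hmem]
    have h1 := hs (n+j)
    have hinv0 : (0:ℝ) ≤ (1 + μ (n+j))⁻¹ := by
      have := hμ (n+j); positivity
    have hinv1 : (1 + μ (n+j))⁻¹ ≤ 1 := by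
      have h := hμ (n+j)
      rw [inv_le_one_iff₀]; right; linarith
    have h2 : s (n+j) * (1 + μ (n+j))⁻¹
        ≤ ((∑ k ∈ Finset.Ico n (n+j), Lam k) + s n * ∏ k ∈ Finset.Ico n (n+j), (1+μ k)⁻¹)
            * (1 + μ (n+j))⁻¹ := mul_le_mul_of_nonneg_right ih hinv0
    have hSig : (0:ℝ) ≤ ∑ k ∈ Finset.Ico n (n+j), Lam k :=
      Finset.sum_nonneg fun k _ => hΛ k
    have h3 : (∑ k ∈ Finset.Ico n (n+j), Lam k) * (1 + μ (n+j))⁻¹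
        ≤ ∑ k ∈ Finset.Ico n (n+j), Lam k := mul_le_of_le_one_right hSig hinv1
    nlinarith [h1, h2, h3]

lemma prods_pos {μ : ℕ → ℝ} (hμ : ∀ n, 0 ≤ μ n) (S : Finset ℕ) :
    0 < ∏ k ∈ S, (1+μ k)⁻¹ :=
  Finset.prod_pos fun k _ => by have := hμ k; positivity

lemma h3_window {μ : ℕ → ℝ} (hμ : ∀ n, 0 ≤ μ n) (h3 : HypH3 μ) :
    ∃ ω N : ℕ, ∃ c : ℝ, 0 < c ∧ c < 1 ∧
      ∀ n ≥ N, ∏ k ∈ Finset.Ico n (n+(ω+1)), (1+μ k)⁻¹ ≤ c := by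
  obtain ⟨ω, hω⟩ := h3
  set L := Filter.limsup (fun n => ∏ k ∈ Finset.Icc n (n + ω), (1 + μ k)⁻¹) Filter.atTop with hL
  set c := (L + 1)/2 with hc
  have hLc : L < c := by rw [hc]; linarith
  have hc1 : c < 1 := by rw [hc]; linarith
  have hbdd : IsBoundedUnder (· ≤ ·) atTop (fun n => ∏ k ∈ Finset.Icc n (n + ω), (1 + μ k)⁻¹) := by
    refine isBoundedUnder_of ⟨1, fun n => ?_⟩
    refine Finset.prod_le_one (fun k _ => by have := hμ k; positivity) (fun k _ => ?_)
    have h := hμ k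
    rw [inv_le_one_iff₀]; right; linarith
  have hev := eventually_lt_of_limsup_lt hLc hbdd
  obtain ⟨N, hN⟩ := eventually_atTop.1 hev
  have hc0 : 0 < c := lt_trans (prods_pos hμ _) (hN N le_rfl)
  refine ⟨ω, N, c, hc0, hc1, fun n hn => ?_⟩
  have : Finset.Ico n (n+(ω+1)) = Finset.Icc n (n+ω) := by
    rw [show n+(ω+1) = (n+ω)+1 by omega, Finset.Ico_add_one_right_eq_Icc]
  rw [this]
  exact (hN n hn).le

lemma bounded_of_rec {s Lam μ : ℕ → ℝ} {C : ℝ}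
    (hs0 : ∀ n, 0 ≤ s n) (hΛ : ∀ n, 0 ≤ Lam n) (hΛC : ∀ n, Lam n ≤ C)
    (hμ : ∀ n, 0 ≤ μ n)
    (hs : ∀ n, s (n+1) ≤ Lam n + s n * (1+μ n)⁻¹)
    (h3 : HypH3 μ) : ∃ B, ∀ n, s n ≤ B := by
  obtain ⟨ω, N, c, hc0, hc1, hwin⟩ := h3_window hμ h3
  set C' := ((ω:ℝ)+1)*C with hC'
  have key : ∀ n ≥ N, s (n+(ω+1)) ≤ C' + c * s n := by
    intro n hn
    have h1 := iter_bound hΛ hμ hs n (ω+1)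
    have h2 : (∑ k ∈ Finset.Ico n (n+(ω+1)), Lam k) ≤ C' := by
      calc (∑ k ∈ Finset.Ico n (n+(ω+1)), Lam k) ≤ ∑ k ∈ Finset.Ico n (n+(ω+1)), C :=
            Finset.sum_le_sum fun k _ => hΛC k
        _ = C' := by rw [Finset.sum_const, Nat.card_Ico, show n + (ω+1) - n = ω+1 from by omega, nsmul_eq_mul, hC']; push_cast; ring
    have h3' : s n * ∏ k ∈ Finset.Ico n (n+(ω+1)), (1+μ k)⁻¹ ≤ s n * c :=
      mul_le_mul_of_nonneg_left (hwin n hn) (hs0 n)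
    nlinarith [h1, h2, h3']
  obtain ⟨B₀, hB₀⟩ : ∃ B₀, ∀ m < N + ω + 1, s m ≤ B₀ := by
    obtain ⟨B₀, hB₀⟩ := ((Finset.range (N+ω+1)).image s).exists_le
    exact ⟨B₀, fun m hm => hB₀ _ (Finset.mem_image_of_mem s (Finset.mem_range.2 hm))⟩
  refine ⟨max B₀ (C'/(1-c)), fun m => ?_⟩
  induction m using Nat.strong_induction_on with
  | _ m ih =>
    by_cases hm : m < N + ω + 1
    · exact (hB₀ m hm).trans (le_max_left _ _)
    · push_neg at hm
      set n := m - (ω+1) with hn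
      have hmn : m = n + (ω+1) := by omega
      have hnN : N ≤ n := by omega
      have hlt : n < m := by omega
      have h1 := key n hnN
      have h2 := ih n hlt
      have h3 : C' + c * (max B₀ (C'/(1-c))) ≤ max B₀ (C'/(1-c)) := by
        have h4 : C'/(1-c) ≤ max B₀ (C'/(1-c)) := le_max_right _ _
        have h5 : C' ≤ (1-c) * max B₀ (C'/(1-c)) := by
          rw [div_le_iff₀ (by linarith : (0:ℝ) < 1 - c)] at h4
          linarith [h4]
        linarith
      calc s m = s (n+(ω+1)) := by rw [hmn]
        _ ≤ C' + c * s n := h1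
        _ ≤ C' + c * (max B₀ (C'/(1-c))) := by nlinarith [h1, h2, hc0.le]
        _ ≤ _ := h3

lemma tendsto_zero_of_rec {w μ : ℕ → ℝ} (hw0 : ∀ n, 0 ≤ w n) (hμ : ∀ n, 0 ≤ μ n)
    (hw : ∀ n, w (n+1) ≤ w n * (1+μ n)⁻¹) (h3 : HypH3 μ) :
    Tendsto w atTop (nhds 0) := by
  obtain ⟨ω, N, c, hc0, hc1, hwin⟩ := h3_window hμ h3
  have hanti : Antitone w := by
    refine antitone_nat_of_succ_le fun n => ?_
    have hinv1 : (1 + μ n)⁻¹ ≤ 1 := by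
      have h := hμ n
      rw [inv_le_one_iff₀]; right; linarith
    exact (hw n).trans (mul_le_of_le_one_right (hw0 n) hinv1)
  have key : ∀ n ≥ N, w (n+(ω+1)) ≤ c * w n := by
    intro n hn
    have h1 := iter_bound (Lam := fun _ => 0) (fun _ => le_rfl) hμ
      (fun n => by simpa using hw n) n (ω+1)
    simp only [Finset.sum_const, smul_zero, zero_add] at h1
    calc w (n+(ω+1)) ≤ w n * ∏ k ∈ Finset.Ico n (n+(ω+1)), (1+μ k)⁻¹ := h1
      _ ≤ w n * c := mul_le_mul_of_nonneg_left (hwin n hn) (hw0 n)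
      _ = c * w n := mul_comm _ _
  have geo : ∀ m : ℕ, w (N + m*(ω+1)) ≤ c^m * w N := by
    intro m
    induction m with
    | zero => simp
    | succ m ih =>
      have harith : N + (m+1)*(ω+1) = (N + m*(ω+1)) + (ω+1) := by ring
      rw [harith]
      calc w ((N + m*(ω+1)) + (ω+1)) ≤ c * w (N + m*(ω+1)) :=
            key _ (Nat.le_add_right N _)
        _ ≤ c * (c^m * w N) := mul_le_mul_of_nonneg_left ih hc0.le
        _ = c^(m+1) * w N := by ring
  rw [Metric.tendsto_atTop]
  intro ε hε
  have hgeo : Tendsto (fun m => c^m * w N) atTop (nhds 0) := by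
    simpa using (tendsto_pow_atTop_nhds_zero_of_lt_one hc0.le hc1).mul_const (w N)
  obtain ⟨m, hm⟩ := (hgeo.eventually (gt_mem_nhds hε)).exists
  refine ⟨N + m*(ω+1), fun n hn => ?_⟩
  rw [Real.dist_eq, sub_zero, abs_of_nonneg (hw0 n)]
  calc w n ≤ w (N + m*(ω+1)) := hanti hn
    _ ≤ c^m * w N := geo m
    _ < ε := hm


lemma prod_abs_bound {f : ℕ → ℝ} {M : ℝ} (hf : ∀ k, |f k| ≤ M) (n lam : ℕ) :
    |∏ k ∈ Finset.Icc n (n+lam), f k| ≤ M^(lam+1) := by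
  rw [Finset.abs_prod]
  calc ∏ k ∈ Finset.Icc n (n+lam), |f k| ≤ ∏ k ∈ Finset.Icc n (n+lam), M :=
        Finset.prod_le_prod (fun k _ => abs_nonneg _) (fun k _ => hf k)
    _ = M^(lam+1) := by
        rw [Finset.prod_const, Nat.card_Icc, show n + lam + 1 - n = lam + 1 from by omega]

lemma prod_diff_tendsto {f₁ f₂ : ℕ → ℝ} {M : ℝ}
    (h₁ : ∀ k, |f₁ k| ≤ M) (h₂ : ∀ k, |f₂ k| ≤ M)
    (hd : Tendsto (fun k => f₁ k - f₂ k) atTop (nhds 0)) (lam : ℕ) :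
    Tendsto (fun n => (∏ k ∈ Finset.Icc n (n+lam), f₁ k) - ∏ k ∈ Finset.Icc n (n+lam), f₂ k)
      atTop (nhds 0) := by
  have hM0 : 0 ≤ M := (abs_nonneg _).trans (h₁ 0)
  induction lam with
  | zero => simpa using hd
  | succ lam ih =>
    have key : ∀ n : ℕ,
        (∏ k ∈ Finset.Icc n (n+(lam+1)), f₁ k) - ∏ k ∈ Finset.Icc n (n+(lam+1)), f₂ k
        = ((∏ k ∈ Finset.Icc n (n+lam), f₁ k) - ∏ k ∈ Finset.Icc n (n+lam), f₂ k) * f₁ (n+lam+1)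
          + (∏ k ∈ Finset.Icc n (n+lam), f₂ k) * (f₁ (n+lam+1) - f₂ (n+lam+1)) := by
      intro n
      rw [show n + (lam+1) = (n+lam) + 1 from by omega,
        Finset.prod_Icc_succ_top (by omega : n ≤ n+lam+1),
        Finset.prod_Icc_succ_top (by omega : n ≤ n+lam+1)]
      ring
    have hshift : Tendsto (fun n => f₁ (n+lam+1) - f₂ (n+lam+1)) atTop (nhds 0) := by
      have := hd.comp (tendsto_add_atTop_nat (lam+1))
      simpa [Function.comp_def, ← add_assoc] using this
    have t1 : Tendsto (fun n =>
        ((∏ k ∈ Finset.Icc n (n+lam), f₁ k) - ∏ k ∈ Finset.Icc n (n+lam), f₂ k) * f₁ (n+lam+1))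
        atTop (nhds 0) := by
      refine squeeze_zero_norm (a := fun n =>
        |(∏ k ∈ Finset.Icc n (n+lam), f₁ k) - ∏ k ∈ Finset.Icc n (n+lam), f₂ k| * M)
        (fun n => ?_) ?_
      · rw [Real.norm_eq_abs, abs_mul]
        exact mul_le_mul_of_nonneg_left (h₁ _) (abs_nonneg _)
      · simpa using ih.abs.mul_const M
    have t2 : Tendsto (fun n =>
        (∏ k ∈ Finset.Icc n (n+lam), f₂ k) * (f₁ (n+lam+1) - f₂ (n+lam+1)))
        atTop (nhds 0) := by
      refine squeeze_zero_norm (a := fun n =>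
        M^(lam+1) * |f₁ (n+lam+1) - f₂ (n+lam+1)|) (fun n => ?_) ?_
      · rw [Real.norm_eq_abs, abs_mul]
        exact mul_le_mul_of_nonneg_right (prod_abs_bound h₂ n lam) (abs_nonneg _)
      · simpa using hshift.abs.const_mul (M^(lam+1))
    simp only [key]
    simpa using t1.add t2


end Helpers

section Helpers2


lemma d2_bound {φ : ℝ → ℝ → ℝ} {kφ Bx : ℝ}
    (hlip : ∀ x₁ x₂ : ℝ, 0 ≤ x₁ → 0 ≤ x₂ → |d2 φ x₁ - d2 φ x₂| ≤ kφ * |x₁ - x₂|)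
    (hk : 0 ≤ kφ) {t : ℝ} (ht0 : 0 ≤ t) (htB : t ≤ Bx) :
    |d2 φ t| ≤ |d2 φ 0| + kφ * Bx := by
  have h1 := hlip t 0 ht0 le_rfl
  rw [sub_zero, abs_of_nonneg ht0] at h1
  have h2 := abs_sub_abs_le_abs_sub (d2 φ t) (d2 φ 0)
  have h3 : kφ * t ≤ kφ * Bx := mul_le_mul_of_nonneg_left htB hk
  linarith

lemma aux_eqs {Lam μ p η : ℕ → ℝ} {x y : ℕ → ℝ} (hμ : ∀ n, 0 ≤ μ n) (hp : ∀ n, 0 ≤ p n)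
    (hη : ∀ n, 0 ≤ η n) (haux : AuxSys Lam μ p η x y) (n : ℕ) :
    x (n+1) * (1 + μ n + p n) = Lam n + η n * y (n+1) + x n ∧
    y (n+1) * (1 + μ n + η n) = p n * x (n+1) + y n := by
  obtain ⟨h1, h2⟩ := haux n
  have d1 : (1:ℝ) + μ n + p n ≠ 0 := by nlinarith [hμ n, hp n]
  have d2 : (1:ℝ) + μ n + η n ≠ 0 := by nlinarith [hμ n, hη n]
  constructor
  · rw [h1]; field_simp
  · rw [h2]; field_simp

lemma aux_pos {Lam μ p η : ℕ → ℝ} {x y : ℕ → ℝ}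
    (hΛ : ∀ n, 0 ≤ Lam n) (hμ : ∀ n, 0 ≤ μ n) (hp : ∀ n, 0 ≤ p n) (hη : ∀ n, 0 ≤ η n)
    (haux : AuxSys Lam μ p η x y) (hx0 : 0 < x 0) (hy0 : 0 < y 0) :
    ∀ n, 0 < x n ∧ 0 < y n := by
  intro n
  induction n with
  | zero => exact ⟨hx0, hy0⟩
  | succ n ih =>
    obtain ⟨hx, hy⟩ := ih
    obtain ⟨e1, e2⟩ := aux_eqs hμ hp hη haux n
    have key : x (n+1) * ((1 + μ n) * (1 + μ n + p n + η n))
        = (Lam n + x n) * (1 + μ n + η n) + η n * y n := by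
      linear_combination (1 + μ n + η n) * e1 + η n * e2
    have hD : (0:ℝ) < (1 + μ n) * (1 + μ n + p n + η n) := by
      nlinarith [hμ n, hp n, hη n]
    have hR : (0:ℝ) < (Lam n + x n) * (1 + μ n + η n) :=
      mul_pos (by linarith [hΛ n]) (by linarith [hμ n, hη n])
    have hR2 : (0:ℝ) ≤ η n * y n := mul_nonneg (hη n) hy.le
    have hx' : 0 < x (n+1) := by
      by_contra h
      push_neg at h
      nlinarith [key, hR, hR2, hD, mul_nonneg (neg_nonneg.2 h) hD.le]
    have hy' : 0 < y (n+1) := by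
      by_contra h
      push_neg at h
      have hd2 : (0:ℝ) < 1 + μ n + η n := by linarith [hμ n, hη n]
      nlinarith [e2, hx', hy, hp n, mul_nonneg (neg_nonneg.2 h) hd2.le,
        mul_nonneg (hp n) hx'.le]
    exact ⟨hx', hy'⟩

lemma sum_step {Lam μ p η : ℕ → ℝ} {x y : ℕ → ℝ}
    (hΛ : ∀ n, 0 ≤ Lam n) (hμ : ∀ n, 0 ≤ μ n) (hp : ∀ n, 0 ≤ p n) (hη : ∀ n, 0 ≤ η n)
    (haux : AuxSys Lam μ p η x y) (n : ℕ) :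
    x (n+1) + y (n+1) ≤ Lam n + (x n + y n) * (1 + μ n)⁻¹ := by
  obtain ⟨e1, e2⟩ := aux_eqs hμ hp hη haux n
  have hd : (0:ℝ) < 1 + μ n := by linarith [hμ n]
  have hsum : (x (n+1) + y (n+1)) * (1 + μ n) = Lam n + (x n + y n) := by
    linear_combination e1 + e2
  have hs' : x (n+1) + y (n+1) = (Lam n + (x n + y n))/(1+μ n) := by
    field_simp
    linarith [hsum]
  rw [hs', ← div_eq_mul_inv, add_div]
  have h2 : Lam n / (1+μ n) ≤ Lam n := div_le_self (hΛ n) (by linarith [hμ n])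
  linarith

lemma w_step {Lam μ p η : ℕ → ℝ} {x₁ y₁ x₂ y₂ : ℕ → ℝ}
    (hμ : ∀ n, 0 ≤ μ n) (hp : ∀ n, 0 ≤ p n) (hη : ∀ n, 0 ≤ η n)
    (haux₁ : AuxSys Lam μ p η x₁ y₁) (haux₂ : AuxSys Lam μ p η x₂ y₂) (n : ℕ) :
    |x₁ (n+1) - x₂ (n+1)| + |y₁ (n+1) - y₂ (n+1)|
      ≤ (|x₁ n - x₂ n| + |y₁ n - y₂ n|) * (1 + μ n)⁻¹ := by
  obtain ⟨e1, e2⟩ := aux_eqs hμ hp hη haux₁ n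
  obtain ⟨f1, f2⟩ := aux_eqs hμ hp hη haux₂ n
  have hμn := hμ n; have hpn := hp n; have hηn := hη n
  have hD : (0:ℝ) < (1 + μ n) * (1 + μ n + p n + η n) := by nlinarith
  have hu : (x₁ (n+1) - x₂ (n+1)) * ((1 + μ n) * (1 + μ n + p n + η n))
      = (1 + μ n + η n) * (x₁ n - x₂ n) + η n * (y₁ n - y₂ n) := by
    linear_combination (1 + μ n + η n) * (e1 - f1) + η n * (e2 - f2)
  have hv : (y₁ (n+1) - y₂ (n+1)) * ((1 + μ n) * (1 + μ n + p n + η n))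
      = p n * (x₁ n - x₂ n) + (1 + μ n + p n) * (y₁ n - y₂ n) := by
    linear_combination p n * (e1 - f1) + (1 + μ n + p n) * (e2 - f2)
  have hau : |x₁ (n+1) - x₂ (n+1)| * ((1 + μ n) * (1 + μ n + p n + η n))
      ≤ (1 + μ n + η n) * |x₁ n - x₂ n| + η n * |y₁ n - y₂ n| := by
    rw [← abs_of_pos hD, ← abs_mul, hu]
    refine (abs_add_le _ _).trans ?_
    rw [abs_mul, abs_mul, abs_of_nonneg (by linarith : (0:ℝ) ≤ 1 + μ n + η n),
      abs_of_nonneg hηn]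
  have hav : |y₁ (n+1) - y₂ (n+1)| * ((1 + μ n) * (1 + μ n + p n + η n))
      ≤ p n * |x₁ n - x₂ n| + (1 + μ n + p n) * |y₁ n - y₂ n| := by
    rw [← abs_of_pos hD, ← abs_mul, hv]
    refine (abs_add_le _ _).trans ?_
    rw [abs_mul, abs_mul, abs_of_nonneg (by linarith : (0:ℝ) ≤ 1 + μ n + p n),
      abs_of_nonneg hpn]
  have h1μ : (0:ℝ) < 1 + μ n := by linarith
  have hsum : (|x₁ (n+1) - x₂ (n+1)| + |y₁ (n+1) - y₂ (n+1)|) * (1 + μ n)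
      ≤ |x₁ n - x₂ n| + |y₁ n - y₂ n| := by
    have hpos : (0:ℝ) < 1 + μ n + p n + η n := by linarith
    nlinarith [hau, hav, hpos]
  rw [← div_eq_mul_inv, le_div_iff₀ h1μ]
  linarith


end Helpers2

/-- The thresholds `R_D^ℓ(ξ*, λ)` and `R_D^u(ξ*, λ)` do not depend on the chosen positive
solution of the auxiliary system. -/
theorem statement4
    (Lam μ p η α β σ γ : ℕ → ℝ) (φ ψ : ℝ → ℝ → ℝ) (kφ kψ : ℝ)
    (hbn : BddNonneg Lam ∧ BddNonneg μ ∧ BddNonneg p ∧ BddNonneg η ∧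
           BddNonneg α ∧ BddNonneg β ∧ BddNonneg σ ∧ BddNonneg γ)
    (h1φ : HypH1 φ kφ) (h1ψ : HypH1 ψ kψ)
    (h2 : HypH2 φ ψ)
    (h3 : HypH3 μ) (h4 : HypH4 Lam p)
    (x₁ y₁ x₂ y₂ : ℕ → ℝ)
    (haux₁ : AuxSys Lam μ p η x₁ y₁) (haux₂ : AuxSys Lam μ p η x₂ y₂)
    (hx₁ : 0 < x₁ 0) (hy₁ : 0 < y₁ 0) (hx₂ : 0 < x₂ 0) (hy₂ : 0 < y₂ 0) :
    ∀ lam : ℕ,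
      RDl μ α β σ γ φ ψ x₁ y₁ lam = RDl μ α β σ γ φ ψ x₂ y₂ lam ∧
      RDu μ α β σ γ φ ψ x₁ y₁ lam = RDu μ α β σ γ φ ψ x₂ y₂ lam := by
  obtain ⟨hbΛ, hbμ, hbp, hbη, hbα, hbβ, hbσ, hbγ⟩ := hbn
  obtain ⟨hΛ0, CΛ, hΛC⟩ := hbΛ
  obtain ⟨hμ0, -⟩ := hbμ
  obtain ⟨hp0, -⟩ := hbp
  obtain ⟨hη0, -⟩ := hbη
  obtain ⟨hα0, -⟩ := hbα
  obtain ⟨hβ0, Cβ, hβC⟩ := hbβ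
  obtain ⟨hσ0, Cσ, hσC⟩ := hbσ
  obtain ⟨hγ0, -⟩ := hbγ
  have hCβ0 : (0:ℝ) ≤ Cβ := (hβ0 0).trans (hβC 0)
  have hCσ0 : (0:ℝ) ≤ Cσ := (hσ0 0).trans (hσC 0)
  have hpos₁ := aux_pos hΛ0 hμ0 hp0 hη0 haux₁ hx₁ hy₁
  have hpos₂ := aux_pos hΛ0 hμ0 hp0 hη0 haux₂ hx₂ hy₂
  obtain ⟨B₁, hB₁⟩ := bounded_of_rec (s := fun n => x₁ n + y₁ n)
    (fun n => by have h := hpos₁ n; show (0:ℝ) ≤ x₁ n + y₁ n; linarith [h.1, h.2]) hΛ0 hΛC hμ0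
    (fun n => sum_step hΛ0 hμ0 hp0 hη0 haux₁ n) h3
  obtain ⟨B₂, hB₂⟩ := bounded_of_rec (s := fun n => x₂ n + y₂ n)
    (fun n => by have h := hpos₂ n; show (0:ℝ) ≤ x₂ n + y₂ n; linarith [h.1, h.2]) hΛ0 hΛC hμ0
    (fun n => sum_step hΛ0 hμ0 hp0 hη0 haux₂ n) h3
  set Bx : ℝ := max B₁ B₂ with hBxdef
  have hxB₁ : ∀ n, x₁ n ≤ Bx := fun n => by
    have h := hpos₁ n; have := hB₁ n
    calc x₁ n ≤ x₁ n + y₁ n := by linarith [h.2]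
      _ ≤ B₁ := hB₁ n
      _ ≤ Bx := le_max_left _ _
  have hyB₁ : ∀ n, y₁ n ≤ Bx := fun n => by
    have h := hpos₁ n
    calc y₁ n ≤ x₁ n + y₁ n := by linarith [h.1]
      _ ≤ B₁ := hB₁ n
      _ ≤ Bx := le_max_left _ _
  have hxB₂ : ∀ n, x₂ n ≤ Bx := fun n => by
    have h := hpos₂ n
    calc x₂ n ≤ x₂ n + y₂ n := by linarith [h.2]
      _ ≤ B₂ := hB₂ n
      _ ≤ Bx := le_max_right _ _
  have hyB₂ : ∀ n, y₂ n ≤ Bx := fun n => by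
    have h := hpos₂ n
    calc y₂ n ≤ x₂ n + y₂ n := by linarith [h.1]
      _ ≤ B₂ := hB₂ n
      _ ≤ Bx := le_max_right _ _
  have hw : Tendsto (fun n => |x₁ n - x₂ n| + |y₁ n - y₂ n|) atTop (nhds 0) :=
    tendsto_zero_of_rec (fun n => by positivity) hμ0
      (fun n => w_step hμ0 hp0 hη0 haux₁ haux₂ n) h3
  have hkφ : (0:ℝ) ≤ kφ := by
    have h := h1φ.2.2.2 0 1 le_rfl zero_le_one
    have h01 : |(0:ℝ) - 1| = 1 := by norm_num
    rw [h01, mul_one] at h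
    linarith [abs_nonneg (d2 φ 0 - d2 φ 1)]
  have hkψ : (0:ℝ) ≤ kψ := by
    have h := h1ψ.2.2.2 0 1 le_rfl zero_le_one
    have h01 : |(0:ℝ) - 1| = 1 := by norm_num
    rw [h01, mul_one] at h
    linarith [abs_nonneg (d2 ψ 0 - d2 ψ 1)]
  set Mφ : ℝ := |d2 φ 0| + kφ * Bx with hMφdef
  set Mψ : ℝ := |d2 ψ 0| + kψ * Bx with hMψdef
  have hBx0 : (0:ℝ) ≤ Bx := (hpos₁ 0).1.le.trans (hxB₁ 0)
  have hMφ0 : (0:ℝ) ≤ Mφ := by positivity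
  have hMψ0 : (0:ℝ) ≤ Mψ := by positivity
  set M : ℝ := 1 + Cβ * Mφ + Cσ * Mψ with hMdef
  set f₁ : ℕ → ℝ := fun k =>
    (1 + β k * d2 φ (x₁ (k+1)) + σ k * d2 ψ (y₁ (k+1))) / (1 + μ k + α k + γ k) with hf₁def
  set f₂ : ℕ → ℝ := fun k =>
    (1 + β k * d2 φ (x₂ (k+1)) + σ k * d2 ψ (y₂ (k+1))) / (1 + μ k + α k + γ k) with hf₂def
  have hden : ∀ k, (1:ℝ) ≤ 1 + μ k + α k + γ k := fun k => by
    linarith [hμ0 k, hα0 k, hγ0 k]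
  have hnum_bound : ∀ (x y : ℕ → ℝ), (∀ n, 0 < x n ∧ 0 < y n) → (∀ n, x n ≤ Bx) →
      (∀ n, y n ≤ Bx) → ∀ k,
      |1 + β k * d2 φ (x (k+1)) + σ k * d2 ψ (y (k+1))| ≤ M := by
    intro x y hpos hxB hyB k
    have l1 : |β k * d2 φ (x (k+1))| ≤ Cβ * Mφ := by
      rw [abs_mul, abs_of_nonneg (hβ0 k)]
      exact mul_le_mul (hβC k)
        (d2_bound h1φ.2.2.2 hkφ (hpos (k+1)).1.le (hxB (k+1))) (abs_nonneg _) hCβ0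
    have l2 : |σ k * d2 ψ (y (k+1))| ≤ Cσ * Mψ := by
      rw [abs_mul, abs_of_nonneg (hσ0 k)]
      exact mul_le_mul (hσC k)
        (d2_bound h1ψ.2.2.2 hkψ (hpos (k+1)).2.le (hyB (k+1))) (abs_nonneg _) hCσ0
    calc |1 + β k * d2 φ (x (k+1)) + σ k * d2 ψ (y (k+1))|
        ≤ |1 + β k * d2 φ (x (k+1))| + |σ k * d2 ψ (y (k+1))| := abs_add_le _ _
      _ ≤ |(1:ℝ)| + |β k * d2 φ (x (k+1))| + |σ k * d2 ψ (y (k+1))| := by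
          linarith [abs_add_le (1:ℝ) (β k * d2 φ (x (k+1)))]
      _ ≤ M := by rw [abs_one, hMdef]; linarith
  have habsf : ∀ (x y : ℕ → ℝ), (∀ n, 0 < x n ∧ 0 < y n) → (∀ n, x n ≤ Bx) →
      (∀ n, y n ≤ Bx) → ∀ k,
      |(1 + β k * d2 φ (x (k+1)) + σ k * d2 ψ (y (k+1))) / (1 + μ k + α k + γ k)| ≤ M := by
    intro x y hpos hxB hyB k
    rw [abs_div, abs_of_pos (by linarith [hden k] : (0:ℝ) < 1 + μ k + α k + γ k)]
    calc |1 + β k * d2 φ (x (k+1)) + σ k * d2 ψ (y (k+1))| / (1 + μ k + α k + γ k)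
        ≤ |1 + β k * d2 φ (x (k+1)) + σ k * d2 ψ (y (k+1))| :=
          div_le_self (abs_nonneg _) (hden k)
      _ ≤ M := hnum_bound x y hpos hxB hyB k
  have hf₁M : ∀ k, |f₁ k| ≤ M := habsf x₁ y₁ hpos₁ hxB₁ hyB₁
  have hf₂M : ∀ k, |f₂ k| ≤ M := habsf x₂ y₂ hpos₂ hxB₂ hyB₂
  -- difference of factors tends to zero
  set K : ℝ := Cβ * kφ + Cσ * kψ with hKdef
  have hdiffb : ∀ k, ‖f₁ k - f₂ k‖ ≤ K * (|x₁ (k+1) - x₂ (k+1)| + |y₁ (k+1) - y₂ (k+1)|) := by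
    intro k
    have hnum : (1 + β k * d2 φ (x₁ (k+1)) + σ k * d2 ψ (y₁ (k+1)))
        - (1 + β k * d2 φ (x₂ (k+1)) + σ k * d2 ψ (y₂ (k+1)))
        = β k * (d2 φ (x₁ (k+1)) - d2 φ (x₂ (k+1)))
          + σ k * (d2 ψ (y₁ (k+1)) - d2 ψ (y₂ (k+1))) := by ring
    have l1 : |β k * (d2 φ (x₁ (k+1)) - d2 φ (x₂ (k+1)))|
        ≤ Cβ * (kφ * |x₁ (k+1) - x₂ (k+1)|) := by
      rw [abs_mul, abs_of_nonneg (hβ0 k)]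
      exact mul_le_mul (hβC k)
        (h1φ.2.2.2 _ _ (hpos₁ (k+1)).1.le (hpos₂ (k+1)).1.le) (abs_nonneg _) hCβ0
    have l2 : |σ k * (d2 ψ (y₁ (k+1)) - d2 ψ (y₂ (k+1)))|
        ≤ Cσ * (kψ * |y₁ (k+1) - y₂ (k+1)|) := by
      rw [abs_mul, abs_of_nonneg (hσ0 k)]
      exact mul_le_mul (hσC k)
        (h1ψ.2.2.2 _ _ (hpos₁ (k+1)).2.le (hpos₂ (k+1)).2.le) (abs_nonneg _) hCσ0
    have hdsub : f₁ k - f₂ k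
        = ((1 + β k * d2 φ (x₁ (k+1)) + σ k * d2 ψ (y₁ (k+1)))
            - (1 + β k * d2 φ (x₂ (k+1)) + σ k * d2 ψ (y₂ (k+1)))) / (1 + μ k + α k + γ k) := by
      rw [hf₁def, hf₂def]
      rw [div_sub_div_same]
    rw [Real.norm_eq_abs, hdsub, hnum, abs_div,
      abs_of_pos (by linarith [hden k] : (0:ℝ) < 1 + μ k + α k + γ k)]
    have hstep : |β k * (d2 φ (x₁ (k+1)) - d2 φ (x₂ (k+1)))
          + σ k * (d2 ψ (y₁ (k+1)) - d2 ψ (y₂ (k+1)))|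
        ≤ K * (|x₁ (k+1) - x₂ (k+1)| + |y₁ (k+1) - y₂ (k+1)|) := by
      refine (abs_add_le _ _).trans ?_
      have m1 : Cβ * (kφ * |x₁ (k+1) - x₂ (k+1)|)
          ≤ Cβ * kφ * (|x₁ (k+1) - x₂ (k+1)| + |y₁ (k+1) - y₂ (k+1)|) := by
        have := abs_nonneg (y₁ (k+1) - y₂ (k+1))
        nlinarith [mul_nonneg hCβ0 hkφ]
      have m2 : Cσ * (kψ * |y₁ (k+1) - y₂ (k+1)|)
          ≤ Cσ * kψ * (|x₁ (k+1) - x₂ (k+1)| + |y₁ (k+1) - y₂ (k+1)|) := by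
        have := abs_nonneg (x₁ (k+1) - x₂ (k+1))
        nlinarith [mul_nonneg hCσ0 hkψ]
      have hK0 : (0:ℝ) ≤ K := by
        rw [hKdef]; positivity
      rw [hKdef]
      nlinarith [l1, l2, m1, m2]
    calc |β k * (d2 φ (x₁ (k+1)) - d2 φ (x₂ (k+1)))
          + σ k * (d2 ψ (y₁ (k+1)) - d2 ψ (y₂ (k+1)))| / (1 + μ k + α k + γ k)
        ≤ |β k * (d2 φ (x₁ (k+1)) - d2 φ (x₂ (k+1)))
          + σ k * (d2 ψ (y₁ (k+1)) - d2 ψ (y₂ (k+1)))| := div_le_self (abs_nonneg _) (hden k)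
      _ ≤ _ := hstep
  have hwshift : Tendsto (fun k => K * (|x₁ (k+1) - x₂ (k+1)| + |y₁ (k+1) - y₂ (k+1)|))
      atTop (nhds 0) := by
    have h := (hw.comp (tendsto_add_atTop_nat 1)).const_mul K
    simpa [Function.comp] using h
  have hdt : Tendsto (fun k => f₁ k - f₂ k) atTop (nhds 0) :=
    squeeze_zero_norm hdiffb hwshift
  intro lam
  have hT := prod_diff_tendsto hf₁M hf₂M hdt lam
  have hinv := liminf_limsup_invariant (M := M^(lam+1))
    (fun n => prod_abs_bound hf₁M n lam) (fun n => prod_abs_bound hf₂M n lam) hT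
  exact ⟨hinv.1, hinv.2⟩
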